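/- Let q be an odd prime power and S a clique of size q in the Paley graph P(q²). Then the balanced characteristic vector of S, i.e. the function f_S with f_S(γ) = (q−1)/q for γ ∈ S and f_S(γ) = −1/q otherwise, is an eigenvector of the adjacency matrix of P(q²) with eigenvalue (−1+q)/2. -/

import Mathlib

open Finset

lemma sum_shift_qc {F : Type*} [Field F] [Fintype F] [DecidableEq F] (hF2 : ringChar F ≠ 2)
    {c : F} (hc : c ≠ 0) :
    ∑ x : F, quadraticChar F x * quadraticChar F (x + c) = -1 := by
  rw [← Finset.sum_erase_add _ _ (Finset.mem_univ (0:F))]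
  have h0 : quadraticChar F 0 * quadraticChar F (0 + c) = 0 := by
    rw [quadraticChar_zero, zero_mul]
  rw [h0, add_zero]
  have h1 : ∀ x ∈ Finset.univ.erase (0:F),
      quadraticChar F x * quadraticChar F (x + c) = quadraticChar F (1 + c * x⁻¹) := by
    intro x hx
    have hx0 : x ≠ 0 := Finset.ne_of_mem_erase hx
    have hxe : x + c = x * (1 + c * x⁻¹) := by field_simp
    rw [hxe, map_mul, ← mul_assoc, ← pow_two, quadraticChar_sq_one hx0, one_mul]
  rw [Finset.sum_congr rfl h1]
  have h2 : ∑ x ∈ Finset.univ.erase (0:F), quadraticChar F (1 + c * x⁻¹)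
      = ∑ t ∈ Finset.univ.erase (1:F), quadraticChar F t := by
    apply Finset.sum_nbij' (i := fun x => 1 + c * x⁻¹) (j := fun t => c * (t - 1)⁻¹)
    · intro x hx
      have hx0 : x ≠ 0 := Finset.ne_of_mem_erase hx
      simp only [Finset.mem_erase, Finset.mem_univ, and_true]
      intro h
      have : c * x⁻¹ = 0 := by linear_combination h
      simp [hc, hx0] at this
    · intro t ht
      have ht1 : t ≠ 1 := Finset.ne_of_mem_erase ht
      simp only [Finset.mem_erase, Finset.mem_univ, and_true]
      have : t - 1 ≠ 0 := sub_ne_zero.mpr ht1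
      simp [hc, this]
    · intro x hx
      have hx0 : x ≠ 0 := Finset.ne_of_mem_erase hx
      field_simp
      simp [hc]
    · intro t ht
      have ht1 : (t:F) - 1 ≠ 0 := sub_ne_zero.mpr (Finset.ne_of_mem_erase ht)
      field_simp
      ring
    · intro x hx; rfl
  rw [h2]
  have h3 := Finset.sum_erase_add Finset.univ (quadraticChar F) (Finset.mem_univ (1:F))
  rw [quadraticChar_sum_zero hF2, map_one] at h3
  omega

theorem paley_aux (q : ℕ) (hq : IsPrimePow q) (hodd : Odd q)
    (F : Type*) [Field F] [Fintype F] [DecidableEq F] (hF : Fintype.card F = q ^ 2)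
    (G : SimpleGraph F) [DecidableRel G.Adj]
    (hG : ∀ x y : F, G.Adj x y ↔ x ≠ y ∧ IsSquare (x - y))
    (S : Finset F) (hS : G.IsNClique q S) :
    (∀ γ : F, 2 * (G.degree γ : ℤ) = q^2 - 1)
    ∧ (∀ γ ∈ S, S ∩ G.neighborFinset γ = S.erase γ)
    ∧ (∀ γ ∉ S, 2 * (((S ∩ G.neighborFinset γ)).card : ℤ) = q - 1) := by
  classical
  have hq2 : 2 ≤ q := hq.two_le
  have hcardodd : Odd (Fintype.card F) := by rw [hF]; exact hodd.pow
  have hF2 : ringChar F ≠ 2 := by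
    intro h
    have h2 := FiniteField.even_card_of_char_two h
    rw [Nat.odd_iff] at hcardodd
    omega
  set χ := quadraticChar F with hχ
  have hsum0 : ∀ s : F, ∑ γ : F, χ (γ - s) = 0 := by
    intro s
    have e := Fintype.sum_equiv (Equiv.subRight s) (fun γ => χ (γ - s)) χ (fun γ => rfl)
    rw [e]
    exact quadraticChar_sum_zero hF2
  have hsum0b : ∀ s : F, ∑ y : F, χ (s - y) = 0 := by
    intro s
    have e := Fintype.sum_equiv (Equiv.subLeft s) (fun y => χ (s - y)) χ (fun γ => rfl)
    rw [e]
    exact quadraticChar_sum_zero hF2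
  have hone : ∀ {x y : F}, G.Adj x y → χ (x - y) = 1 := by
    intro x y hxy
    rcases (hG x y).mp hxy with ⟨hne, hsq⟩
    exact (quadraticChar_one_iff_isSquare (sub_ne_zero.mpr hne)).mpr hsq
  have hneg : ∀ {x y : F}, x ≠ y → ¬ G.Adj x y → χ (x - y) = -1 := by
    intro x y hne hna
    apply quadraticChar_neg_one_iff_not_isSquare.mpr
    intro hsq
    exact hna ((hG x y).mpr ⟨hne, hsq⟩)
  have hcardF : (Fintype.card F : ℤ) = (q:ℤ)^2 := by rw [hF]; push_cast; ring
  -- degrees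
  have hdeg : ∀ γ : F, 2 * (G.degree γ : ℤ) = q^2 - 1 := by
    intro γ
    have key : ∀ y : F, χ (γ - y) =
        (if G.Adj γ y then (2:ℤ) else 0) + (if y = γ then 1 else 0) - 1 := by
      intro y
      by_cases hadj : G.Adj γ y
      · have hne : y ≠ γ := (G.ne_of_adj hadj).symm
        rw [hone hadj]; simp [hadj, hne]
      · by_cases hy : y = γ
        · subst hy; simp [hadj, quadraticChar_zero, hχ]
        · rw [hneg (fun h => hy h.symm) hadj]; simp [hadj, hy]
    have h := hsum0b γ
    rw [Finset.sum_congr rfl (fun y _ => key y), Finset.sum_sub_distrib,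
      Finset.sum_add_distrib] at h
    have e1 : ∑ y : F, (if G.Adj γ y then (2:ℤ) else 0) = 2 * (G.degree γ : ℤ) := by
      rw [← Finset.sum_filter, Finset.sum_const, ← SimpleGraph.neighborFinset_eq_filter,
        SimpleGraph.card_neighborFinset_eq_degree, nsmul_eq_mul, mul_comm]
    have e2 : ∑ y : F, (if y = γ then (1:ℤ) else 0) = 1 := by
      simp
    have e3 : ∑ _y : F, (1:ℤ) = (q:ℤ)^2 := by
      rw [Finset.sum_const, Finset.card_univ]; simp [hcardF]
    rw [e1, e2, e3] at h
    linarith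
  refine ⟨hdeg, ?_, ?_⟩
  · intro γ hγ
    ext s
    simp only [Finset.mem_inter, SimpleGraph.mem_neighborFinset, Finset.mem_erase]
    constructor
    · rintro ⟨hsS, hadj⟩; exact ⟨(G.ne_of_adj hadj).symm, hsS⟩
    · rintro ⟨hne, hsS⟩
      exact ⟨hsS, hS.isClique (Finset.mem_coe.mpr hγ) (Finset.mem_coe.mpr hsS) (Ne.symm hne)⟩
  · -- the hard part
    have hcardS : S.card = q := hS.card_eq
    set T : F → ℤ := fun γ => ∑ s ∈ S, χ (γ - s) with hT
    have hTin : ∀ γ ∈ S, T γ = q - 1 := by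
      intro γ hγ
      have h' : T γ = ∑ s ∈ S.erase γ, χ (γ - s) + χ (γ - γ) :=
        (Finset.sum_erase_add S _ hγ).symm
      rw [sub_self, quadraticChar_zero, add_zero] at h'
      have hval : ∀ s ∈ S.erase γ, χ (γ - s) = 1 := fun s hs =>
        hone (hS.isClique (Finset.mem_coe.mpr hγ)
          (Finset.mem_coe.mpr (Finset.mem_of_mem_erase hs))
          (Ne.symm (Finset.ne_of_mem_erase hs)))
      rw [h', Finset.sum_congr rfl hval, Finset.sum_const,
        Finset.card_erase_of_mem hγ, hcardS]
      simp only [nsmul_eq_mul, mul_one]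
      omega
    have hTtotal : ∑ γ : F, T γ = 0 := by
      rw [hT, Finset.sum_comm]
      exact Finset.sum_eq_zero fun s _ => hsum0 s
    have hinner : ∀ s s' : F, ∑ γ : F, χ (γ - s) * χ (γ - s')
        = if s = s' then (q:ℤ)^2 - 1 else -1 := by
      intro s s'
      have hre : ∑ γ : F, χ (γ - s) * χ (γ - s')
          = ∑ x : F, χ (x + (s' - s)) * χ x := by
        apply Fintype.sum_equiv (Equiv.subRight s')
        intro γ
        simp only [Equiv.subRight_apply]
        ring_nf
      rw [hre]
      by_cases hss : s = s'
      · subst hss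
        rw [if_pos rfl]
        have h1 : ∀ x : F, χ (x + (s - s)) * χ x = 1 - (if x = 0 then 1 else 0) := by
          intro x
          rw [sub_self, add_zero]
          by_cases hx : x = 0
          · simp [hx, hχ, quadraticChar_zero]
          · rw [← pow_two, quadraticChar_sq_one hx]; simp [hx]
        rw [Finset.sum_congr rfl fun x _ => h1 x, Finset.sum_sub_distrib,
          Finset.sum_const, Finset.card_univ, hF]
        have h2 : ∑ x : F, (if x = 0 then (1:ℤ) else 0) = 1 := by simp
        rw [h2]
        push_cast
        ring
      · rw [if_neg hss]
        have hc : s' - s ≠ 0 := sub_ne_zero.mpr (Ne.symm hss)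
        rw [← sum_shift_qc hF2 hc]
        exact Finset.sum_congr rfl fun x _ => mul_comm _ _
    have hTsq : ∑ γ : F, (T γ)^2 = (q:ℤ)^2 * (q - 1) := by
      have expand : ∀ γ : F, (T γ)^2 = ∑ s ∈ S, ∑ s' ∈ S, χ (γ - s) * χ (γ - s') := by
        intro γ; rw [pow_two, hT, Finset.sum_mul_sum]
      rw [Finset.sum_congr rfl fun γ _ => expand γ, Finset.sum_comm]
      rw [Finset.sum_congr rfl fun s _ => Finset.sum_comm]
      have inner2 : ∀ s ∈ S, ∑ s' ∈ S, ∑ γ : F, χ (γ - s) * χ (γ - s')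
          = (q:ℤ)^2 - q := by
        intro s hs
        rw [Finset.sum_congr rfl fun s' _ => hinner s s']
        have : ∀ s' ∈ S, (if s = s' then (q:ℤ)^2 - 1 else -1)
            = -1 + (if s = s' then (q:ℤ)^2 else 0) := by
          intro s' _; by_cases h : s = s' <;> simp [h] <;> ring
        rw [Finset.sum_congr rfl this, Finset.sum_add_distrib, Finset.sum_const,
          Finset.sum_ite_eq S s (fun _ => (q:ℤ)^2), if_pos hs, hcardS]
        push_cast; ring
      rw [Finset.sum_congr rfl inner2, Finset.sum_const, hcardS]
      push_cast; ring
    have houtT : ∀ γ ∉ S, T γ = -1 := by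
      have keyzero : ∑ γ ∈ Finset.univ \ S, (T γ + 1)^2 = 0 := by
        have hsub : S ⊆ Finset.univ := Finset.subset_univ S
        have e0 : ∀ γ ∈ Finset.univ \ S, (T γ + 1)^2 = (T γ)^2 + 2 * T γ + 1 := by
          intro γ _; ring
        rw [Finset.sum_congr rfl e0, Finset.sum_add_distrib, Finset.sum_add_distrib]
        have eA : ∑ γ ∈ Finset.univ \ S, (T γ)^2 = (q:ℤ)^2*(q-1) - (q:ℤ)*(q-1)^2 := by
          rw [Finset.sum_sdiff_eq_sub hsub, hTsq,
            Finset.sum_congr rfl (fun γ hγ => by rw [hTin γ hγ]), Finset.sum_const, hcardS]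
          push_cast; ring
        have eB : ∑ γ ∈ Finset.univ \ S, 2 * T γ = -2*(q:ℤ)*(q-1) := by
          rw [← Finset.mul_sum, Finset.sum_sdiff_eq_sub hsub, hTtotal,
            Finset.sum_congr rfl (fun γ hγ => hTin γ hγ), Finset.sum_const, hcardS]
          push_cast; ring
        have eC : ∑ _γ ∈ Finset.univ \ S, (1:ℤ) = (q:ℤ)^2 - q := by
          rw [Finset.sum_const, Finset.card_sdiff_of_subset hsub, Finset.card_univ, hF, hcardS]
          have hle : q ≤ q^2 := Nat.le_self_pow (by norm_num) q
          rw [nsmul_eq_mul, mul_one, Nat.cast_sub hle]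
          push_cast
          ring
        rw [eA, eB, eC]; ring
      intro γ hγ
      have hmem : γ ∈ Finset.univ \ S := Finset.mem_sdiff.mpr ⟨Finset.mem_univ γ, hγ⟩
      have := (Finset.sum_eq_zero_iff_of_nonneg
        (fun x _ => sq_nonneg (T x + 1))).mp keyzero γ hmem
      have h2 : T γ + 1 = 0 := by
        exact pow_eq_zero_iff (by norm_num) |>.mp this
      linarith
    intro γ hγ
    have key : T γ = ∑ s ∈ S, (if s ∈ G.neighborFinset γ then (1:ℤ) else -1) := by
      apply Finset.sum_congr rfl
      intro s hs
      have hne : γ ≠ s := fun h => hγ (h ▸ hs)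
      by_cases hadj : G.Adj γ s
      · rw [hone hadj, if_pos (SimpleGraph.mem_neighborFinset _ _ _ |>.mpr hadj)]
      · rw [hneg hne hadj, if_neg (fun h => hadj ((SimpleGraph.mem_neighborFinset _ _ _).mp h))]
    rw [Finset.sum_ite, Finset.sum_const, Finset.sum_const] at key
    have hfil : S.filter (· ∈ G.neighborFinset γ) = S ∩ G.neighborFinset γ :=
      Finset.filter_mem_eq_inter
    have hcards := Finset.card_filter_add_card_filter_not
      (s := S) (p := (· ∈ G.neighborFinset γ))
    rw [hfil] at key hcards
    rw [hcardS] at hcards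
    have hTγ := houtT γ hγ
    rw [key] at hTγ
    simp only [nsmul_eq_mul, smul_eq_mul, mul_one, mul_neg] at hTγ
    have : ((S ∩ G.neighborFinset γ).card : ℤ) - ((S.filter (fun s => ¬ s ∈ G.neighborFinset γ)).card : ℤ) = -1 := by
      linarith [hTγ]
    omega


/-- Let `q` be an odd prime power and `S` a clique of size `q` in the Paley graph
`P(q²)`. Then the balanced characteristic vector of `S` (equal to `(q−1)/q` on `S`
and `−1/q` elsewhere) is an eigenvector of the adjacency matrix of `P(q²)` with
eigenvalue `(−1+q)/2`. -/
theorem paley_balanced_char_vec_eigenvector (q : ℕ) (hq : IsPrimePow q) (hodd : Odd q)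
    (F : Type*) [Field F] [Fintype F] [DecidableEq F] (hF : Fintype.card F = q ^ 2)
    (G : SimpleGraph F) [DecidableRel G.Adj]
    (hG : ∀ x y : F, G.Adj x y ↔ x ≠ y ∧ IsSquare (x - y))
    (S : Finset F) (hS : G.IsNClique q S)
    (f : F → ℝ) (hf : ∀ γ, f γ = if γ ∈ S then ((q : ℝ) - 1) / q else -1 / q) :
    f ≠ 0 ∧ (G.adjMatrix ℝ).mulVec f = ((-1 + (q : ℝ)) / 2) • f := by
  classical
  obtain ⟨hdeg, hkin, hkout⟩ := paley_aux q hq hodd F hF G hG S hS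
  have hq2 : 2 ≤ q := hq.two_le
  have hqR : (q:ℝ) ≠ 0 := Nat.cast_ne_zero.mpr (by omega)
  have hq2R : (2:ℝ) ≤ (q:ℝ) := by exact_mod_cast hq2
  constructor
  · obtain ⟨s, hs⟩ : S.Nonempty := Finset.card_pos.mp (by rw [hS.card_eq]; omega)
    intro h0
    have h1 : f s = 0 := congrFun h0 s
    rw [hf s, if_pos hs] at h1
    rcases div_eq_zero_iff.mp h1 with h | h
    · linarith
    · exact hqR h
  · funext γ
    rw [SimpleGraph.adjMatrix_mulVec_apply]
    set k := (S ∩ G.neighborFinset γ).card with hk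
    set m := ((G.neighborFinset γ).filter (fun u => ¬ u ∈ S)).card with hm
    have hfil : (G.neighborFinset γ).filter (fun u => u ∈ S) = S ∩ G.neighborFinset γ := by
      rw [Finset.filter_mem_eq_inter, Finset.inter_comm]
    have hcards : k + m = G.degree γ := by
      rw [hk, hm, ← hfil]
      exact Finset.card_filter_add_card_filter_not (p := (fun u => u ∈ S))
    have hsum : ∑ u ∈ G.neighborFinset γ, f u
        = (k : ℝ) * (((q:ℝ)-1)/q) + (m : ℝ) * (-1/q) := by
      rw [Finset.sum_congr rfl (fun u _ => hf u), Finset.sum_ite, Finset.sum_const,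
        Finset.sum_const, hfil, ← hk, ← hm, nsmul_eq_mul, nsmul_eq_mul]
    have hdR : 2 * ((k:ℝ) + m) = (q:ℝ)^2 - 1 := by
      have h1 := hdeg γ
      have h2 : ((k + m : ℕ) : ℤ) = (G.degree γ : ℤ) := by rw [hcards]
      have h3 : 2 * ((k:ℤ) + m) = (q:ℤ)^2 - 1 := by push_cast at h2 ⊢; rw [h2]; exact h1
      exact_mod_cast h3
    rw [hsum, Pi.smul_apply, smul_eq_mul, hf γ]
    by_cases hγ : γ ∈ S
    · rw [if_pos hγ]
      have hkq : (k:ℝ) = (q:ℝ) - 1 := by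
        have : k = q - 1 := by
          rw [hk, hkin γ hγ, Finset.card_erase_of_mem hγ, hS.card_eq]
        rw [this, Nat.cast_sub (by omega)]
        norm_num
      have hmq : (m:ℝ) = ((q:ℝ)^2 - 1)/2 - ((q:ℝ) - 1) := by linarith
      rw [hkq, hmq]
      field_simp
      ring
    · rw [if_neg hγ]
      have hkq : (k:ℝ) = ((q:ℝ) - 1)/2 := by
        have h1 := hkout γ hγ
        have h2 : 2 * (k:ℝ) = (q:ℝ) - 1 := by exact_mod_cast h1
        linarith
      have hmq : (m:ℝ) = ((q:ℝ)^2 - 1)/2 - ((q:ℝ) - 1)/2 := by linarith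
      rw [hkq, hmq]
      field_simp
      ring
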